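/- Let G be a dense additive subgroup of ℝ containing ℤ, 𝔾 = G ∩ [0,1) under addition modulo 1. If N is the set of positive integers n for which 𝔾 has no element of order n and N is nonempty, then the set D_N = {i/n : n ∈ N, 0 ≤ i ≤ n−1} is a divisible subgroup of ([0,1), +₁). -/

import Mathlib

/-- `hasOrderExactly G n` : the group `𝔾 = G ∩ [0,1)` under addition modulo 1 has an
element of order exactly `n`. -/
def hasOrderExactly (G : AddSubgroup ℝ) (n : ℕ) : Prop :=
  ∃ g : ℝ, g ∈ G ∧ g ∈ Set.Ico (0:ℝ) 1 ∧ Int.fract ((n : ℝ) * g) = 0 ∧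
    ∀ k : ℕ, 1 ≤ k → k < n → Int.fract ((k : ℝ) * g) ≠ 0

/-- Downward transfer: an element of order `n*m` yields an element of order `n`. -/
lemma order_descend (G : AddSubgroup ℝ) (hZ : ∀ k : ℤ, (k : ℝ) ∈ G)
    (n m : ℕ) (hm : 0 < m) (h : hasOrderExactly G (n * m)) : hasOrderExactly G n := by
  obtain ⟨g, hgG, hgI, hfr, hlt⟩ := h
  refine ⟨Int.fract ((m : ℝ) * g), ?_, ⟨Int.fract_nonneg _, Int.fract_lt_one _⟩, ?_, ?_⟩
  · have h1 : (m : ℝ) * g ∈ G := by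
      have := AddSubgroup.nsmul_mem G hgG m
      simpa [nsmul_eq_mul] using this
    have h2 : (m : ℝ) * g - (⌊(m : ℝ) * g⌋ : ℝ) ∈ G := G.sub_mem h1 (hZ _)
    rwa [Int.self_sub_floor] at h2
  · have : (n : ℝ) * Int.fract ((m : ℝ) * g)
        = (n : ℝ) * ((m : ℝ) * g) - (n * ⌊(m : ℝ) * g⌋ : ℤ) := by
      rw [← Int.self_sub_floor]; push_cast; ring
    rw [this, Int.fract_sub_intCast]
    have : (n : ℝ) * ((m : ℝ) * g) = ((n * m : ℕ) : ℝ) * g := by push_cast; ring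
    rw [this, hfr]
  · intro k hk1 hkn
    have : (k : ℝ) * Int.fract ((m : ℝ) * g)
        = ((k * m : ℕ) : ℝ) * g - (k * ⌊(m : ℝ) * g⌋ : ℤ) := by
      rw [← Int.self_sub_floor]; push_cast; ring
    rw [this, Int.fract_sub_intCast]
    exact hlt (k * m) (Nat.one_le_iff_ne_zero.mpr (by positivity))
      ((Nat.mul_lt_mul_right hm).mpr hkn)

/-- If `N` (the set of positive integers `n` with no element of order `n` in `𝔾`) is
nonempty, then `D_N = {i/n : n ∈ N, 0 ≤ i ≤ n-1}` is a divisible subgroup of `([0,1), +₁)`: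
it contains `0`, is closed under addition mod 1 and negation mod 1, and is divisible. -/
theorem stmt_9 (G : AddSubgroup ℝ) (hdense : Dense (G : Set ℝ))
    (hZ : ∀ k : ℤ, (k : ℝ) ∈ G)
    (N : Set ℕ) (hN : N = {n : ℕ | 0 < n ∧ ¬ hasOrderExactly G n}) (hne : N.Nonempty)
    (D : Set ℝ) (hD : D = {x : ℝ | ∃ n ∈ N, ∃ i : ℕ, i ≤ n - 1 ∧ x = (i : ℝ) / n}) :
    (0 : ℝ) ∈ D ∧
    (∀ x ∈ D, ∀ y ∈ D, Int.fract (x + y) ∈ D) ∧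
    (∀ x ∈ D, Int.fract (-x) ∈ D) ∧
    (∀ d ∈ D, ∀ m : ℕ, 0 < m → ∃ e ∈ D, Int.fract ((m : ℝ) * e) = d) := by
  -- N is closed under multiplication by positive naturals
  have hmul : ∀ n ∈ N, ∀ m : ℕ, 0 < m → n * m ∈ N := by
    intro n hn m hm
    rw [hN] at hn ⊢
    exact ⟨Nat.mul_pos hn.1 hm, fun h => hn.2 (order_descend G hZ n m hm h)⟩
  have hpos : ∀ n ∈ N, 0 < n := by intro n hn; rw [hN] at hn; exact hn.1
  subst hD
  refine ⟨?_, ?_, ?_, ?_⟩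
  · obtain ⟨n, hn⟩ := hne
    exact ⟨n, hn, 0, Nat.zero_le _, by simp⟩
  · rintro x ⟨n, hn, i, hi, rfl⟩ y ⟨m, hm, j, hj, rfl⟩
    have hn0 : 0 < n := hpos n hn
    have hm0 : 0 < m := hpos m hm
    have hnm : 0 < n * m := Nat.mul_pos hn0 hm0
    refine ⟨n * m, hmul n hn m hm0, (i * m + j * n) % (n * m),
      Nat.le_pred_of_lt (Nat.mod_lt _ hnm), ?_⟩
    have : (i : ℝ) / n + (j : ℝ) / m = ((i * m + j * n : ℕ) : ℝ) / ((n * m : ℕ) : ℝ) := by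
      push_cast
      field_simp
    rw [this, Int.fract_div_natCast_eq_div_natCast_mod]
  · rintro x ⟨n, hn, i, hi, rfl⟩
    have hn0 : 0 < n := hpos n hn
    have hin : i ≤ n := le_trans hi (Nat.sub_le _ _)
    refine ⟨n, hn, (n - i) % n, Nat.le_pred_of_lt (Nat.mod_lt _ hn0), ?_⟩
    have : -((i : ℝ) / n) = ((n - i : ℕ) : ℝ) / ((n : ℕ) : ℝ) - 1 := by
      rw [Nat.cast_sub hin]
      field_simp
      ring
    rw [this, Int.fract_sub_one, Int.fract_div_natCast_eq_div_natCast_mod]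
  · rintro d ⟨n, hn, i, hi, rfl⟩ m hm
    have hn0 : 0 < n := hpos n hn
    refine ⟨(i : ℝ) / ((n * m : ℕ) : ℝ), ⟨n * m, hmul n hn m hm, i, ?_, rfl⟩, ?_⟩
    · exact le_trans hi (Nat.sub_le_sub_right (Nat.le_mul_of_pos_right n hm) 1)
    · have hin : i < n := by omega
      have h1 : (m : ℝ) * ((i : ℝ) / ((n * m : ℕ) : ℝ)) = (i : ℝ) / n := by
        have hm' : (m : ℝ) ≠ 0 := by exact_mod_cast hm.ne'
        have hn' : (n : ℝ) ≠ 0 := by exact_mod_cast hn0.ne'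
        push_cast
        field_simp
      rw [h1, Int.fract_eq_self.mpr ⟨by positivity, by
        rw [div_lt_one (by exact_mod_cast hn0)]; exact_mod_cast hin⟩]
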